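/- Assume f ≤ P. For all nonnegative integers n and k with n + k < f, the attempt times satisfy R_n^{(k)} − S_{P+n−f+k} = G_n^{(f−k)}; consequently, for k ≥ 1 with n + k < f, S_{P+n−f+k} − R_n^{(k−1)} = 1 − G_n^{(f−k)}. -/

import Mathlib

/-- Identities relating attempt times to successes and gaps
(eq.att.suc and eq.att.suc2). -/
theorem attempt_success_gap_identities
    (P : ℕ) (hP : 0 < P) (q : ℕ) (r : ℝ) (hr0 : 0 ≤ r) (hr1 : r < 1)
    (f : ℕ) (hfP : f ≤ P) (S : ℕ → ℝ)
    (hS : ∀ m n : ℕ, m < n → n ≤ P - 1 → S m < S n)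
    (G1 : ℕ → ℝ)
    (hG1 : ∀ n : ℕ, 1 ≤ n → n ≤ P - 1 → G1 n = S n - S (n - 1) - 1)
    (hG10 : G1 0 = S 0 + q + r + f - S (P - 1))
    (G : ℕ → ℕ → ℝ)
    (hG : ∀ n k : ℕ,
      G n k = ∑ i ∈ Finset.range k, G1 (((n : ℤ) - i) % (P : ℤ)).toNat)
    (R : ℕ → ℕ → ℝ)
    (hR : ∀ n k : ℕ, R n k = S n + 1 + q + r + k) :
    (∀ n k : ℕ, n + k < f → R n k - S (P + n + k - f) = G n (f - k)) ∧
    (∀ n k : ℕ, 1 ≤ k → n + k < f →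
      S (P + n + k - f) - R n (k - 1) = 1 - G n (f - k)) := by
  -- telescoping sums of G1 over initial segments
  have hT : ∀ t : ℕ, t ≤ P - 1 →
      ∑ j ∈ Finset.range (t + 1), G1 j
        = S t + (q : ℝ) + r + f - S (P - 1) - t := by
    intro t ht
    induction t with
    | zero =>
      rw [Finset.sum_range_one, hG10]
      push_cast
      ring
    | succ t ih =>
      rw [Finset.sum_range_succ, ih (by omega), hG1 (t + 1) (by omega) ht]
      simp only [Nat.add_sub_cancel]
      push_cast
      ring
  have key : ∀ n k : ℕ, n + k < f →
      R n k - S (P + n + k - f) = G n (f - k) := by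
    intro n k hnk
    have hn : n < P := by omega
    rw [hG]
    have hsplit : (∑ i ∈ Finset.range (n + 1), G1 (((n : ℤ) - i) % (P : ℤ)).toNat)
        + ∑ i ∈ Finset.Ico (n + 1) (f - k), G1 (((n : ℤ) - i) % (P : ℤ)).toNat
        = ∑ i ∈ Finset.range (f - k), G1 (((n : ℤ) - i) % (P : ℤ)).toNat :=
      Finset.sum_range_add_sum_Ico _ (by omega)
    rw [← hsplit]
    -- first block
    have e1 : (∑ i ∈ Finset.range (n + 1), G1 (((n : ℤ) - i) % (P : ℤ)).toNat)
        = ∑ j ∈ Finset.range (n + 1), G1 j := by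
      rw [show (∑ i ∈ Finset.range (n + 1), G1 (((n : ℤ) - i) % (P : ℤ)).toNat)
          = ∑ i ∈ Finset.range (n + 1), G1 (n + 1 - 1 - i) from ?_,
        Finset.sum_range_reflect]
      refine Finset.sum_congr rfl fun i hi => ?_
      have hi' : i ≤ n := by simpa [Nat.lt_succ_iff] using hi
      congr 1
      have h1 : ((n : ℤ) - i) % (P : ℤ) = (n : ℤ) - i :=
        Int.emod_eq_of_lt (by omega) (by omega)
      rw [h1]
      omega
    -- second block
    have e2 : (∑ i ∈ Finset.Ico (n + 1) (f - k), G1 (((n : ℤ) - i) % (P : ℤ)).toNat)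
        = ∑ j ∈ Finset.Ico (P + n + 1 - (f - k)) P, G1 j := by
      refine Finset.sum_nbij' (fun i => P + n - i) (fun j => P + n - j) ?_ ?_ ?_ ?_ ?_
      · intro i hi
        simp only [Finset.mem_Ico] at hi ⊢
        omega
      · intro j hj
        simp only [Finset.mem_Ico] at hj ⊢
        omega
      · intro i hi
        simp only [Finset.mem_Ico] at hi
        omega
      · intro j hj
        simp only [Finset.mem_Ico] at hj
        omega
      · intro i hi
        simp only [Finset.mem_Ico] at hi
        congr 1
        have h1 : ((n : ℤ) - i) % (P : ℤ) = ((n : ℤ) - i + P) % (P : ℤ) := by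
          conv_rhs => rw [show (n : ℤ) - i + P = (n : ℤ) - i + P * 1 by ring,
            Int.add_mul_emod_self_left]
        have h2 : ((n : ℤ) - i + P) % (P : ℤ) = (n : ℤ) - i + P :=
          Int.emod_eq_of_lt (by omega) (by omega)
        rw [h1, h2]
        omega
    rw [e1, e2]
    have ha : 1 ≤ P + n + 1 - (f - k) := by omega
    rw [Finset.sum_Ico_eq_sub _ (by omega : P + n + 1 - (f - k) ≤ P)]
    have hr1' : ∑ j ∈ Finset.range P, G1 j = (q : ℝ) + r + f - (P - 1 : ℕ) := by
      have := hT (P - 1) le_rfl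
      rw [show P - 1 + 1 = P by omega] at this
      rw [this]; ring
    have hr2 : ∑ j ∈ Finset.range (P + n + 1 - (f - k)), G1 j
        = S (P + n + k - f) + (q : ℝ) + r + f - S (P - 1) - (P + n + k - f : ℕ) := by
      have := hT (P + n + k - f) (by omega)
      rw [show P + n + k - f + 1 = P + n + 1 - (f - k) by omega] at this
      rw [this]
    rw [hT n (by omega), hr1', hr2, hR]
    have c1 : ((P - 1 : ℕ) : ℝ) = (P : ℝ) - 1 := by
      have : (1 : ℕ) ≤ P := hP
      push_cast [this]; ring
    have c2 : ((P + n + k - f : ℕ) : ℝ) = (P : ℝ) + n + k - f := by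
      have : f ≤ P + n + k := by omega
      push_cast [this]; ring
    rw [c1, c2]
    ring
  refine ⟨key, fun n k hk hnk => ?_⟩
  have h := key n k hnk
  rw [hR] at h ⊢
  have : ((k - 1 : ℕ) : ℝ) = (k : ℝ) - 1 := by push_cast [hk]; ring
  rw [this]
  linarith
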